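/- Let k be an odd positive integer, η_j = cos(jπ/k), and let c₀,…,c_k be the unique reals with Σ_j c_j η_j^i = [i = 1] for 0 ≤ i ≤ k. Then Σ_{j=0}^k |c_j| = k. -/

import Mathlib

open Finset Real

open Polynomial in
private lemma cheb_T_natDegree_le (n : ℕ) : (Polynomial.Chebyshev.T ℝ (n : ℤ)).natDegree ≤ n := by
  induction n using Nat.twoStepInduction with
  | zero => simp [Polynomial.Chebyshev.T_zero]
  | one => simp [Polynomial.Chebyshev.T_one]
  | more n ih1 ih2 =>
    have h : ((n + 2 : ℕ) : ℤ) = (n : ℤ) + 2 := by push_cast; ring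
    have h1 : ((n + 1 : ℕ) : ℤ) = (n : ℤ) + 1 := by push_cast; ring
    rw [h1] at ih2
    rw [h, Polynomial.Chebyshev.T_add_two]
    refine le_trans (natDegree_sub_le _ _) (max_le ?_ (by omega))
    refine le_trans (natDegree_mul_le) ?_
    have : (2 * X : ℝ[X]).natDegree ≤ 1 :=
      le_trans (natDegree_mul_le) (by simp)
    omega

theorem chebyshev_coeffs_abs_sum (k : ℕ) (hk : Odd k) (hpos : 0 < k)
    (c : Fin (k + 1) → ℝ)
    (hc : ∀ i : Fin (k + 1),
      ∑ j : Fin (k + 1), c j * (Real.cos (j * Real.pi / k)) ^ (i : ℕ)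
        = if (i : ℕ) = 1 then 1 else 0) :
    ∑ j : Fin (k + 1), |c j| = k := by
  have hk0 : (k : ℝ) ≠ 0 := Nat.cast_ne_zero.mpr hpos.ne'
  set η : Fin (k + 1) → ℝ := fun j => Real.cos (j * Real.pi / k) with hη
  -- basic facts about the nodes
  have hmem : ∀ j : Fin (k + 1), 0 ≤ (j : ℝ) * π / k ∧ (j : ℝ) * π / k ≤ π := by
    intro j
    constructor
    · positivity
    · rw [div_le_iff₀ (by positivity)]
      have : (j : ℝ) ≤ k := by exact_mod_cast Nat.lt_succ_iff.mp j.isLt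
      nlinarith [Real.pi_pos]
  have hanti : ∀ i j : Fin (k + 1), i < j → η j < η i := by
    intro i j hij
    refine Real.cos_lt_cos_of_nonneg_of_le_pi (hmem i).1 (hmem j).2 ?_
    have : (i : ℝ) < j := by exact_mod_cast hij
    have := Real.pi_pos
    have hkpos : (0:ℝ) < k := by positivity
    gcongr
  have hne : ∀ i j : Fin (k + 1), i ≠ j → η i ≠ η j := by
    intro i j hij
    rcases lt_or_gt_of_ne hij with h | h
    · exact (hanti i j h).ne'
    · exact (hanti j i h).ne
  have hinj : Set.InjOn η (Finset.univ : Finset (Fin (k+1))) := by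
    intro i _ j _ h
    by_contra hij
    exact hne i j hij h
  have hrev : ∀ j : Fin (k + 1), η j.rev = -η j := by
    intro j
    have hjv : (j.rev : ℕ) = k - (j : ℕ) := by
      simp [Fin.val_rev]
    have hjk : (j : ℕ) ≤ k := Nat.lt_succ_iff.mp j.isLt
    have : ((j.rev : ℕ) : ℝ) * π / k = π - (j : ℝ) * π / k := by
      rw [hjv, Nat.cast_sub hjk]
      field_simp
    show Real.cos _ = -Real.cos _
    rw [this, Real.cos_pi_sub]
  have hη0 : ∀ j : Fin (k + 1), η j ≠ 0 := by
    intro j h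
    rw [hη] at h
    rw [Real.cos_eq_zero_iff] at h
    obtain ⟨n, hn⟩ := h
    have h2 : 2 * (j : ℝ) * k = (2 * n + 1) * k * k := by
      field_simp at hn
      nlinarith [Real.pi_pos, hn]
    have h3 : 2 * (j : ℤ) * k = (2 * n + 1) * k * k := by exact_mod_cast h2
    obtain ⟨l, hl⟩ := hk
    have : Even (2 * (j : ℤ) * (k:ℤ)) := ⟨(j : ℤ) * k, by ring⟩
    rw [h3] at this
    have hodd : Odd ((2 * n + 1) * (k:ℤ) * k) := by
      refine Odd.mul (Odd.mul ⟨n, by ring⟩ ?_) ?_ <;> exact ⟨l, by exact_mod_cast hl⟩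
    exact (Int.not_odd_iff_even.mpr this) hodd
  have m1 : Fin (k + 1) := ⟨1, by omega⟩
  have key : ∀ p : Polynomial ℝ, p.natDegree < k + 1 →
      ∑ j : Fin (k + 1), c j * p.eval (η j) = p.coeff 1 := by
    intro p hp
    have e : ∀ j : Fin (k+1), p.eval (η j)
        = ∑ i ∈ Finset.range (k+1), p.coeff i * η j ^ i :=
      fun j => Polynomial.eval_eq_sum_range' hp _
    calc ∑ j : Fin (k+1), c j * p.eval (η j)
        = ∑ j : Fin (k+1), ∑ i ∈ Finset.range (k+1), c j * (p.coeff i * η j ^ i) := by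
          simp_rw [e, Finset.mul_sum]
      _ = ∑ i ∈ Finset.range (k+1), ∑ j : Fin (k+1), c j * (p.coeff i * η j ^ i) :=
          Finset.sum_comm
      _ = ∑ i ∈ Finset.range (k+1), p.coeff i * ∑ j : Fin (k+1), c j * η j ^ i := by
          refine Finset.sum_congr rfl fun i _ => ?_
          rw [Finset.mul_sum]
          exact Finset.sum_congr rfl fun j _ => by ring
      _ = ∑ i : Fin (k+1), p.coeff (i:ℕ) * ∑ j : Fin (k+1), c j * η j ^ (i:ℕ) :=
          (Fin.sum_univ_eq_sum_range _ _).symm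
      _ = ∑ i : Fin (k+1), p.coeff (i:ℕ) * (if (i:ℕ) = 1 then 1 else 0) := by
          refine Finset.sum_congr rfl fun i _ => ?_
          rw [hc i]
      _ = p.coeff 1 := by
          have h1 : ∀ i : Fin (k+1), ((i:ℕ) = 1 ↔ i = ⟨1, by omega⟩) := by
            intro i; rw [Fin.ext_iff]
          simp_rw [h1, mul_ite, mul_one, mul_zero]
          rw [Finset.sum_ite_eq' Finset.univ (⟨1, by omega⟩ : Fin (k+1))
            (fun i => p.coeff (i:ℕ))]
          simp
  classical
  set W : Polynomial ℝ := ∏ j : Fin (k+1), (Polynomial.X - Polynomial.C (η j)) with hWdef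
  have hW0 : W.coeff 0 = ∏ j : Fin (k+1), (-(η j)) := by
    rw [Polynomial.coeff_zero_eq_eval_zero, hWdef, Polynomial.eval_prod]
    simp
  have hsuminv : ∑ m : Fin (k+1), (η m)⁻¹ = 0 := by
    have h2 : ∑ m : Fin (k+1), (η m)⁻¹ = ∑ m : Fin (k+1), (η (Fin.revPerm m))⁻¹ :=
      (Equiv.sum_comp Fin.revPerm (fun m => (η m)⁻¹)).symm
    have h3 : ∀ m : Fin (k+1), (η (Fin.revPerm m))⁻¹ = -(η m)⁻¹ := by
      intro m
      rw [show Fin.revPerm m = m.rev from rfl, hrev, inv_neg]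
    simp_rw [h3, Finset.sum_neg_distrib] at h2
    linarith
  have hW1 : W.coeff 1 = 0 := by
    have hd : W.coeff 1 = (Polynomial.derivative W).eval 0 := by
      rw [← Polynomial.coeff_zero_eq_eval_zero, Polynomial.coeff_derivative]
      simp
    have hder : Polynomial.derivative W = ∑ i : Fin (k+1),
        (∏ j ∈ Finset.univ.erase i, (Polynomial.X - Polynomial.C (η j))) *
          Polynomial.derivative (Polynomial.X - Polynomial.C (η i)) := by
      rw [hWdef, Finset.prod_eq_multiset_prod, Polynomial.derivative_prod,
        Finset.sum_eq_multiset_sum]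
      congr 1
    rw [hd, hder, Polynomial.eval_finset_sum]
    have hterm : ∀ m : Fin (k+1),
        Polynomial.eval 0 ((∏ i ∈ Finset.univ.erase m, (Polynomial.X - Polynomial.C (η i))) *
          Polynomial.derivative (Polynomial.X - Polynomial.C (η m)))
        = (∏ j : Fin (k+1), (-(η j))) * (-(η m))⁻¹ := by
      intro m
      rw [Polynomial.eval_mul, Polynomial.eval_prod]
      have hder : Polynomial.derivative (Polynomial.X - Polynomial.C (η m)) = 1 := by
        simp
      rw [hder]
      simp only [Polynomial.eval_one, mul_one, Polynomial.eval_sub, Polynomial.eval_X,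
        Polynomial.eval_C, zero_sub]
      have hprod := Finset.prod_erase_mul Finset.univ (fun j => -(η j)) (Finset.mem_univ m)
      have hne0 : -(η m) ≠ 0 := neg_ne_zero.mpr (hη0 m)
      field_simp at hprod ⊢
      rw [← hprod, neg_div, neg_neg, mul_div_assoc, div_self (hη0 m), mul_one]
    rw [Finset.sum_congr rfl (fun m _ => hterm m)]
    rw [← Finset.mul_sum]
    have : ∑ m : Fin (k+1), (-(η m))⁻¹ = 0 := by
      simp_rw [inv_neg, Finset.sum_neg_distrib, hsuminv, neg_zero]
    rw [this, mul_zero]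
  set Q : ℝ := -(W.coeff 0) with hQdef
  have hQ0 : Q ≠ 0 := by
    rw [hQdef, hW0]
    simp only [ne_eq, neg_eq_zero]
    exact Finset.prod_ne_zero_iff.mpr (fun j _ => neg_ne_zero.mpr (hη0 j))
  have hc_eq : ∀ m : Fin (k+1),
      c m = (∏ i ∈ Finset.univ.erase m, (η m - η i))⁻¹ * (Q / (η m)^2) := by
    intro m
    set N : Polynomial ℝ := ∏ i ∈ Finset.univ.erase m, (Polynomial.X - Polynomial.C (η i))
      with hNdef
    have hWN : W = (Polynomial.X - Polynomial.C (η m)) * N :=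
      (Finset.mul_prod_erase Finset.univ _ (Finset.mem_univ m)).symm
    have hN0 : W.coeff 0 = -(η m) * N.coeff 0 := by
      rw [hWN, Polynomial.mul_coeff_zero]
      congr 1
      simp
    have hN1 : W.coeff 1 = N.coeff 0 - η m * N.coeff 1 := by
      rw [hWN, sub_mul, Polynomial.coeff_sub, Polynomial.coeff_X_mul, Polynomial.coeff_C_mul]
    have hN1' : N.coeff 1 = Q / (η m)^2 := by
      have h := hη0 m
      rw [hW1] at hN1
      have h01 : N.coeff 0 = η m * N.coeff 1 := by linarith
      rw [hQdef, hN0, h01]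
      field_simp
    have hbasis : Lagrange.basis Finset.univ η m
        = Polynomial.C (∏ i ∈ Finset.univ.erase m, (η m - η i)⁻¹) * N := by
      simp only [Lagrange.basis, Lagrange.basisDivisor, hNdef]
      rw [Finset.prod_mul_distrib, ← map_prod]
    have hdeg : (Lagrange.basis Finset.univ η m).natDegree < k + 1 := by
      rw [Lagrange.natDegree_basis hinj (Finset.mem_univ m)]
      simp
    have hcm : c m = (Lagrange.basis Finset.univ η m).coeff 1 := by
      rw [← key _ hdeg]
      rw [Finset.sum_eq_single_of_mem m (Finset.mem_univ m)]
      · rw [Lagrange.eval_basis_self hinj (Finset.mem_univ m), mul_one]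
      · intro j _ hjm
        rw [Lagrange.eval_basis_of_ne (Ne.symm hjm) (Finset.mem_univ j), mul_zero]
    rw [hcm, hbasis, Polynomial.coeff_C_mul, hN1', Finset.prod_inv_distrib]
  set D : Fin (k+1) → ℝ := fun m => ∏ i ∈ Finset.univ.erase m, (η m - η i) with hDdef
  have hA : ∀ m : Fin (k+1), 0 < (-1:ℝ)^(m:ℕ) * D m := by
    intro m
    have hsplit : (-1:ℝ)^(m:ℕ)
        = ∏ i ∈ Finset.univ.erase m, (if i < m then (-1:ℝ) else 1) := by
      rw [Finset.prod_ite, Finset.prod_const, Finset.prod_const, one_pow, mul_one]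
      congr 1
      have hfil : (Finset.univ.erase m).filter (fun i => i < m) = Finset.Iio m := by
        ext i
        simp only [Finset.mem_filter, Finset.mem_erase, Finset.mem_univ, Finset.mem_Iio,
          true_and, and_iff_right_iff_imp]
        exact fun h => ⟨h.ne, trivial⟩
      rw [hfil, Fin.card_Iio]
    rw [hsplit, hDdef, ← Finset.prod_mul_distrib]
    apply Finset.prod_pos
    intro i hi
    have him : i ≠ m := (Finset.mem_erase.mp hi).1
    by_cases hlt : i < m
    · have := hanti i m hlt
      simp only [if_pos hlt]
      nlinarith
    · have hmi : m < i := lt_of_le_of_ne (not_lt.mp hlt) (Ne.symm him)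
      have := hanti m i hmi
      simp only [if_neg hlt]
      nlinarith
  have hD0 : ∀ m : Fin (k+1), D m ≠ 0 := by
    intro m
    intro h
    have := hA m
    rw [h, mul_zero] at this
    exact lt_irrefl _ this
  have hsq : ∀ m : Fin (k+1), ((-1:ℝ)^(m:ℕ)) * ((-1:ℝ)^(m:ℕ)) = 1 := by
    intro m
    rw [← pow_add, ← two_mul, pow_mul]
    norm_num
  have hc2 : ∀ m : Fin (k+1),
      c m = (-1:ℝ)^(m:ℕ) * (Q / (η m^2 * ((-1)^(m:ℕ) * D m))) := by
    intro m
    rw [hc_eq m]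
    show (D m)⁻¹ * (Q / η m ^ 2) = _
    have h1 := hη0 m
    have h2 := hD0 m
    have h3 : ((-1:ℝ)^(m:ℕ)) ≠ 0 := pow_ne_zero _ (by norm_num)
    field_simp
  set S : ℝ := ∑ m : Fin (k+1), (η m^2 * ((-1)^(m:ℕ) * D m))⁻¹ with hSdef
  have hden : ∀ m : Fin (k+1), 0 < η m^2 * ((-1)^(m:ℕ) * D m) := by
    intro m
    have h1 : 0 < η m ^ 2 := pow_two_pos_of_ne_zero (hη0 m)
    exact mul_pos h1 (hA m)
  have hS : 0 ≤ S := Finset.sum_nonneg fun m _ => le_of_lt (inv_pos.mpr (hden m))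
  have hsum_abs : ∑ m : Fin (k+1), |c m| = |Q| * S := by
    rw [hSdef, Finset.mul_sum]
    refine Finset.sum_congr rfl fun m _ => ?_
    rw [hc2 m, abs_mul, abs_pow, abs_neg, abs_one, one_pow, one_mul, abs_div,
      abs_of_pos (hden m), div_eq_mul_inv]
  have hsum_alt : ∑ m : Fin (k+1), c m * (-1:ℝ)^(m:ℕ) = Q * S := by
    rw [hSdef, Finset.mul_sum]
    refine Finset.sum_congr rfl fun m _ => ?_
    rw [hc2 m]
    rw [div_eq_mul_inv]
    calc (-1:ℝ)^(m:ℕ) * (Q * (η m^2 * ((-1)^(m:ℕ) * D m))⁻¹) * (-1:ℝ)^(m:ℕ)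
        = ((-1:ℝ)^(m:ℕ) * (-1:ℝ)^(m:ℕ)) * (Q * (η m^2 * ((-1)^(m:ℕ) * D m))⁻¹) := by ring
      _ = Q * (η m^2 * ((-1)^(m:ℕ) * D m))⁻¹ := by rw [hsq m, one_mul]
  have hdegT : (Polynomial.Chebyshev.T ℝ (k:ℤ)).natDegree < k + 1 :=
    Nat.lt_succ_of_le (cheb_T_natDegree_le k)
  have heval : ∀ m : Fin (k+1),
      (Polynomial.Chebyshev.T ℝ (k:ℤ)).eval (η m) = (-1:ℝ)^(m:ℕ) := by
    intro m
    show (Polynomial.Chebyshev.T ℝ (k:ℤ)).eval (Real.cos ((m:ℝ) * π / k)) = _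
    rw [Polynomial.Chebyshev.T_real_cos]
    have harg : ((k:ℤ):ℝ) * ((m:ℝ) * π / k) = (m:ℝ) * π - 0 := by
      push_cast
      field_simp
      ring
    rw [harg, Real.cos_nat_mul_pi_sub, Real.cos_zero, mul_one]
  have hT : Q * S = (Polynomial.Chebyshev.T ℝ (k:ℤ)).coeff 1 := by
    rw [← hsum_alt, ← key _ hdegT]
    refine Finset.sum_congr rfl fun m _ => ?_
    rw [heval m]
  have hcoeffT : |(Polynomial.Chebyshev.T ℝ (k:ℤ)).coeff 1| = k := by
    have h1 : (Polynomial.Chebyshev.T ℝ (k:ℤ)).coeff 1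
        = Polynomial.eval 0 (Polynomial.derivative (Polynomial.Chebyshev.T ℝ (k:ℤ))) := by
      rw [← Polynomial.coeff_zero_eq_eval_zero, Polynomial.coeff_derivative]
      simp
    have hU : (Polynomial.Chebyshev.U ℝ ((k:ℤ)-1)).eval 0 = Real.sin ((k:ℝ) * (π/2)) := by
      have h := Polynomial.Chebyshev.U_real_cos (π/2) ((k:ℤ)-1)
      rw [Real.cos_pi_div_two, Real.sin_pi_div_two, mul_one] at h
      rw [h]
      congr 1
      push_cast
      ring
    rw [h1, Polynomial.Chebyshev.T_derivative_eq_U, Polynomial.eval_mul,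
      Polynomial.eval_intCast, hU]
    have hsin : |Real.sin ((k:ℝ) * (π/2))| = 1 := by
      obtain ⟨l, hl⟩ := hk
      have harg2 : (k:ℝ) * (π/2) = (l:ℝ) * π + π/2 := by
        rw [hl]
        push_cast
        ring
      rw [harg2, Real.sin_add, Real.sin_pi_div_two, Real.cos_pi_div_two,
        Real.sin_nat_mul_pi, zero_mul, zero_add, mul_one]
      have : Real.cos ((l:ℝ) * π) = (-1:ℝ)^l := by
        have := Real.cos_nat_mul_pi_sub 0 l
        simpa using this
      rw [this, abs_pow, abs_neg, abs_one, one_pow]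
    rw [abs_mul, hsin, mul_one]
    push_cast
    rw [abs_of_nonneg (by positivity : (0:ℝ) ≤ (k:ℝ))]
  calc ∑ j : Fin (k+1), |c j| = |Q| * S := hsum_abs
    _ = |Q * S| := by rw [abs_mul, abs_of_nonneg hS]
    _ = |(Polynomial.Chebyshev.T ℝ (k:ℤ)).coeff 1| := by rw [hT]
    _ = k := hcoeffT
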